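/- Let n ≥ 1, let a, b, Y, v, d ∈ ℝⁿ with b_i ≥ 0 and Y_i ≥ 0 for all i, let K be a real n×n matrix such that |v_i| ≤ ∑_{j=1}^n K_{ij} Y_j for every i, and let ε > 0. If the matrix diag(a) − (1+ε) Kᵀ diag(b) K is positive semidefinite, then ∑_{i=1}^n a_i Y_i² − ∑_{i=1}^n b_i (v_i + d_i)² ≥ −(1 + ε⁻¹) ∑_{i=1}^n b_i d_i². -/

import Mathlib

open Matrix

lemma young_aux (ε x y : ℝ) (hε : 0 < ε) :
    (x + y) ^ 2 ≤ (1 + ε) * x ^ 2 + (1 + ε⁻¹) * y ^ 2 := by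
  have h : ε⁻¹ = 1 / ε := by ring
  rw [h]
  have h2 : ε * (x + y) ^ 2 ≤ ε * ((1 + ε) * x ^ 2 + (1 + 1/ε) * y ^ 2) := by
    have : ε * (1 + 1/ε) = ε + 1 := by field_simp
    nlinarith [sq_nonneg (ε * x - y), sq_nonneg x]
  exact le_of_mul_le_mul_left h2 hε

/-- disturbed boundary-term estimate used in the ISS proof:
if `|v i| ≤ ∑ j, K i j * Y j` with `b, Y ≥ 0`, `ε > 0`, and
`diag(a) − (1+ε)Kᵀdiag(b)K` is positive semidefinite, then
`∑ a_i Y_i² − ∑ b_i (v_i + d_i)² ≥ −(1+ε⁻¹) ∑ b_i d_i²`. -/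
theorem stmt_11 (n : ℕ) (hn : 1 ≤ n) (a b Y v d : Fin n → ℝ)
    (hb : ∀ i, 0 ≤ b i) (hY : ∀ i, 0 ≤ Y i)
    (K : Matrix (Fin n) (Fin n) ℝ)
    (hv : ∀ i, |v i| ≤ ∑ j, K i j * Y j)
    (ε : ℝ) (hε : 0 < ε)
    (hN : (Matrix.diagonal a - (1 + ε) • (Kᵀ * Matrix.diagonal b * K)).PosSemidef) :
    ∑ i, a i * (Y i) ^ 2 - ∑ i, b i * (v i + d i) ^ 2
      ≥ -(1 + ε⁻¹) * ∑ i, b i * (d i) ^ 2 := by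
  set s : Fin n → ℝ := fun i => ∑ j, K i j * Y j with hs
  -- PSD gives the key quadratic form inequality
  have hpsd := hN.dotProduct_mulVec_nonneg Y
  have hquad : (1 + ε) * ∑ i, b i * (s i) ^ 2 ≤ ∑ i, a i * (Y i) ^ 2 := by
    have heq : (star Y) ⬝ᵥ ((Matrix.diagonal a - (1 + ε) • (Kᵀ * Matrix.diagonal b * K)) *ᵥ Y)
        = ∑ i, a i * (Y i) ^ 2 - (1 + ε) * ∑ i, b i * (s i) ^ 2 := by
      have h1 : (Kᵀ * Matrix.diagonal b * K) *ᵥ Y = Kᵀ *ᵥ (Matrix.diagonal b *ᵥ (K *ᵥ Y)) := by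
        rw [← Matrix.mulVec_mulVec, ← Matrix.mulVec_mulVec]
      rw [Matrix.sub_mulVec, Matrix.smul_mulVec, h1]
      rw [dotProduct_sub, dotProduct_smul]
      have hd : (star Y) ⬝ᵥ (Matrix.diagonal a *ᵥ Y) = ∑ i, a i * (Y i) ^ 2 := by
        simp [Matrix.mulVec_diagonal, dotProduct]
        congr 1; ext i; ring
      have hK : (star Y) ⬝ᵥ (Kᵀ *ᵥ (Matrix.diagonal b *ᵥ (K *ᵥ Y)))
          = ∑ i, b i * (s i) ^ 2 := by
        have : (star Y : Fin n → ℝ) = Y := by simp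
        rw [this, Matrix.dotProduct_mulVec, Matrix.vecMul_transpose]
        simp only [dotProduct, Matrix.mulVec_diagonal]
        refine Finset.sum_congr rfl fun i _ => ?_
        simp only [Matrix.mulVec, dotProduct, hs]
        ring
      rw [hd, hK]; simp
    rw [heq] at hpsd
    linarith
  -- Young's inequality termwise
  have hterm : ∀ i, b i * (v i + d i) ^ 2
      ≤ (1 + ε) * (b i * (s i) ^ 2) + (1 + ε⁻¹) * (b i * (d i) ^ 2) := by
    intro i
    have hv2 : (v i) ^ 2 ≤ (s i) ^ 2 := by
      have h1 : |v i| ^ 2 ≤ (s i) ^ 2 := by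
        have := hv i
        nlinarith [abs_nonneg (v i)]
      rwa [sq_abs] at h1
    have hy := young_aux ε (v i) (d i) hε
    have hy2 := young_aux ε (s i) (d i) hε
    nlinarith [hb i, hε, mul_le_mul_of_nonneg_left hy (hb i), mul_le_mul_of_nonneg_left hv2 (hb i)]
  have hsum : ∑ i, b i * (v i + d i) ^ 2
      ≤ (1 + ε) * ∑ i, b i * (s i) ^ 2 + (1 + ε⁻¹) * ∑ i, b i * (d i) ^ 2 := by
    rw [Finset.mul_sum, Finset.mul_sum, ← Finset.sum_add_distrib]
    exact Finset.sum_le_sum fun i _ => hterm i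
  linarith
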